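/- Representer theorem (closed-span case): Suppose the subspace H_{K,x} spanned by the kernel sections at the input points x₁,…,x_{l+u} is closed in H_K. If the minimisation problem f_{z,γ} = argmin_{f ∈ H_K} I(f), with I(f) = (1/l) Σ_{j=1}^l V_{x_j}(y_j, C_{x_j} f(x_j)) + γ_A ‖f‖² + γ_I ⟨f̄, M f̄⟩ and γ_A > 0, has a solution, then every solution has the form f_{z,γ} = Σ_{j=1}^{l+u} K_{x_j} a_j for some a_j ∈ W_{x_j}. -/

import Mathlib

open scoped RealInnerProductSpace

variable {l u : ℕ}

/-- The regularised learning functional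
`I(f) = (1/l) Σ_j V_j(y_j, C_j f(x_j)) + γ_A ‖f‖² + γ_I ⟨f̄, M f̄⟩`, where the
evaluation at the input point `x_i` is `f(x_i) = K_{x_i}* f` and
`f̄ = (f(x_1),…,f(x_{l+u}))`. -/
noncomputable def lossI {HK : Type} [NormedAddCommGroup HK] [InnerProductSpace ℝ HK]
    [CompleteSpace HK]
    (Wb : Fin (l + u) → Type) [∀ i, NormedAddCommGroup (Wb i)]
    [∀ i, InnerProductSpace ℝ (Wb i)] [∀ i, CompleteSpace (Wb i)]
    (Yb : Fin l → Type) [∀ j, NormedAddCommGroup (Yb j)] [∀ j, InnerProductSpace ℝ (Yb j)]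
    (Kx : ∀ i, Wb i →L[ℝ] HK)
    (C : ∀ j : Fin l, Wb (Fin.castAdd u j) →L[ℝ] Yb j)
    (y : ∀ j : Fin l, Yb j)
    (V : ∀ j : Fin l, Yb j → Yb j → ℝ)
    (M : PiLp 2 Wb →L[ℝ] PiLp 2 Wb)
    (γA γI : ℝ) (f : HK) : ℝ :=
  (1 / (l : ℝ)) * ∑ j : Fin l, V j (y j) (C j ((Kx (Fin.castAdd u j)).adjoint f))
    + γA * ‖f‖ ^ 2
    + γI * ⟪(WithLp.equiv 2 (∀ i, Wb i)).symm (fun i => (Kx i).adjoint f),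
        M ((WithLp.equiv 2 (∀ i, Wb i)).symm (fun i => (Kx i).adjoint f))⟫


/-- Representer theorem (closed-span case): if the span of the kernel sections at the
input points is closed and the minimisation problem has a solution, then every solution
is a linear combination of kernel sections. -/
theorem representer_closed_span {HK : Type} [NormedAddCommGroup HK]
    [InnerProductSpace ℝ HK] [CompleteSpace HK]
    (Wb : Fin (l + u) → Type) [∀ i, NormedAddCommGroup (Wb i)]
    [∀ i, InnerProductSpace ℝ (Wb i)] [∀ i, CompleteSpace (Wb i)]
    (Yb : Fin l → Type) [∀ j, NormedAddCommGroup (Yb j)] [∀ j, InnerProductSpace ℝ (Yb j)]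
    (Kx : ∀ i, Wb i →L[ℝ] HK)
    (C : ∀ j : Fin l, Wb (Fin.castAdd u j) →L[ℝ] Yb j)
    (y : ∀ j : Fin l, Yb j)
    (V : ∀ j : Fin l, Yb j → Yb j → ℝ)
    (M : PiLp 2 Wb →L[ℝ] PiLp 2 Wb)
    (hM : ∀ v w : PiLp 2 Wb, ⟪M v, w⟫ = ⟪v, M w⟫) (hMpos : ∀ w : PiLp 2 Wb, 0 ≤ ⟪w, M w⟫)
    (γA γI : ℝ) (hγA : 0 < γA) (hγI : 0 ≤ γI)
    (hclosed : IsClosed ((Submodule.span ℝ (⋃ i, Set.range (Kx i)) : Submodule ℝ HK) : Set HK))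
    (fzγ : HK) (hmin : ∀ g : HK, lossI Wb Yb Kx C y V M γA γI fzγ ≤ lossI Wb Yb Kx C y V M γA γI g) :
    ∃ a : ∀ i, Wb i, fzγ = ∑ i, Kx i (a i) := by

  classical
  set S : Submodule ℝ HK := Submodule.span ℝ (⋃ i, Set.range (Kx i)) with hS
  haveI : CompleteSpace S := hclosed.completeSpace_coe
  set g : HK := (S.orthogonalProjectionOnto fzγ : HK) with hg
  have hgS : g ∈ S := (S.orthogonalProjectionOnto fzγ).2
  have hperp : fzγ - g ∈ Sᗮ := S.sub_starProjection_mem_orthogonal fzγ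
  have hmemS : ∀ i (w : Wb i), Kx i w ∈ S := fun i w =>
    Submodule.subset_span (Set.mem_iUnion.2 ⟨i, Set.mem_range_self w⟩)
  have hadj : ∀ i, (Kx i).adjoint g = (Kx i).adjoint fzγ := by
    intro i
    have key : ∀ w : Wb i, ⟪(Kx i).adjoint (fzγ - g), w⟫ = 0 := by
      intro w
      rw [ContinuousLinearMap.adjoint_inner_left]
      exact Submodule.inner_left_of_mem_orthogonal (hmemS i w) hperp
    have h0 : (Kx i).adjoint (fzγ - g) = 0 := by
      have := key ((Kx i).adjoint (fzγ - g))
      exact inner_self_eq_zero.mp this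
    exact ((map_sub ((Kx i).adjoint) fzγ g).symm.trans h0 |> sub_eq_zero.mp).symm
  have hinner0 : ⟪g, fzγ - g⟫ = 0 :=
    Submodule.inner_right_of_mem_orthogonal hgS hperp
  have hpyth : ‖fzγ‖ ^ 2 = ‖g‖ ^ 2 + ‖fzγ - g‖ ^ 2 := by
    have : fzγ = g + (fzγ - g) := by abel
    calc ‖fzγ‖ ^ 2 = ‖g + (fzγ - g)‖ ^ 2 := by rw [← this]
      _ = ‖g‖ ^ 2 + 2 * ⟪g, fzγ - g⟫ + ‖fzγ - g‖ ^ 2 := norm_add_sq_real _ _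
      _ = ‖g‖ ^ 2 + ‖fzγ - g‖ ^ 2 := by rw [hinner0]; ring
  have hle := hmin g
  have hlossdiff : lossI Wb Yb Kx C y V M γA γI g - lossI Wb Yb Kx C y V M γA γI fzγ
      = γA * (‖g‖ ^ 2 - ‖fzγ‖ ^ 2) := by
    simp only [lossI, hadj]
    ring
  have hnle : ‖fzγ‖ ^ 2 ≤ ‖g‖ ^ 2 := by
    nlinarith [hle, hlossdiff]
  have hzero : fzγ - g = 0 := by
    have h1 : ‖fzγ - g‖ ^ 2 ≤ 0 := by nlinarith
    have := sq_nonneg ‖fzγ - g‖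
    have : ‖fzγ - g‖ = 0 := by nlinarith
    exact norm_eq_zero.mp this
  have hfS : fzγ ∈ S := by
    have : fzγ = g := by
      have := hzero
      linear_combination (norm := abel_nf) this
    rw [this]; exact hgS
  -- now express fzγ as a sum of kernel sections
  have hspan : S = ⨆ i, Submodule.span ℝ (Set.range (Kx i)) := by
    rw [hS, Submodule.span_iUnion]
  have hrange : ∀ i, Submodule.span ℝ (Set.range (Kx i)) = LinearMap.range (Kx i : Wb i →ₗ[ℝ] HK) := by
    intro i
    rw [← ContinuousLinearMap.coe_coe, ← LinearMap.coe_range]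
    exact Submodule.span_eq _
  rw [hspan] at hfS
  obtain ⟨c, hc, hcsum⟩ := (Submodule.mem_iSup_iff_exists_finsupp _ _).mp hfS
  have hcr : ∀ i, ∃ w : Wb i, Kx i w = c i := by
    intro i
    have := hc i
    rw [hrange i] at this
    exact this
  choose a ha using hcr
  refine ⟨a, ?_⟩
  have : (c.sum fun _ xi => xi) = ∑ i, c i := Finsupp.sum_fintype _ _ (fun _ => rfl)
  rw [← hcsum, this]
  exact Finset.sum_congr rfl fun i _ => (ha i).symm
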